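/- Let P be a finite p-group for an odd prime p such that every subgroup of P is an ICΦ-subgroup of P. Then P is abelian. -/

import Mathlib

open Subgroup
open scoped commutatorElement

section Calc

variable {G : Type*} [Group G] {a b c : G}

lemma rel_ab (hc : ⁅a, b⁆ = c) : a * b * a⁻¹ = c * b := by
  rw [← hc]; group

lemma rel_conj_a (hc : ⁅a, b⁆ = c) (hca : Commute c a) : a⁻¹ * b * a = c⁻¹ * b := by
  have h1 : a * b * a⁻¹ = c * b := rel_ab hc
  have h3 : a⁻¹ * c * a = c := by
    rw [mul_assoc, hca.eq]; group
  have h2 : b = c * (a⁻¹ * b * a) := by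
    calc b = a⁻¹ * (a * b * a⁻¹) * a := by group
    _ = a⁻¹ * (c * b) * a := by rw [h1]
    _ = (a⁻¹ * c * a) * (a⁻¹ * b * a) := by group
    _ = c * (a⁻¹ * b * a) := by rw [h3]
  have h4 : c * (a⁻¹ * b * a) = c * (c⁻¹ * b) := by rw [← h2]; group
  exact mul_left_cancel h4

lemma conj_zpow_formula (x y : G) (j : ℤ) : (x * y * x⁻¹) ^ j = x * y ^ j * x⁻¹ := by
  have := map_zpow (MulAut.conj x) y j
  simpa [MulAut.conj_apply] using this

lemma conjpow1 (hc : ⁅a, b⁆ = c) (hca : Commute c a) (hcb : Commute c b) (j : ℤ) :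
    b ^ j * a * b ^ (-j) = a * c ^ (-j) := by
  have h1 : a⁻¹ * b ^ j * a = (c⁻¹ * b) ^ j := by
    have := conj_zpow_formula a⁻¹ b j
    rw [inv_inv] at this
    rw [← this, rel_conj_a hc hca]
  have h2 : (c⁻¹ * b) ^ j = c ^ (-j) * b ^ j := by
    rw [(hcb.inv_left).mul_zpow, inv_zpow, zpow_neg]
  have h3 : a⁻¹ * b ^ j * a = c ^ (-j) * b ^ j := h1.trans h2
  have h4 : b ^ j * a = a * c ^ (-j) * b ^ j := by
    calc b ^ j * a = a * (a⁻¹ * b ^ j * a) := by group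
    _ = a * (c ^ (-j) * b ^ j) := by rw [h3]
    _ = a * c ^ (-j) * b ^ j := by group
  calc b ^ j * a * b ^ (-j) = (b ^ j * a) * b ^ (-j) := by group
  _ = a * c ^ (-j) * b ^ j * b ^ (-j) := by rw [h4]
  _ = a * c ^ (-j) := by group

lemma swap_pow (hc : ⁅a, b⁆ = c) (hca : Commute c a) (hcb : Commute c b) (i j : ℤ) :
    b ^ j * a ^ i = a ^ i * c ^ (-(i * j)) * b ^ j := by
  have h1 : b ^ j * a ^ i * (b ^ j)⁻¹ = (b ^ j * a * (b ^ j)⁻¹) ^ i :=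
    (conj_zpow_formula (b ^ j) a i).symm
  have h2 : b ^ j * a * (b ^ j)⁻¹ = a * c ^ (-j) := by
    rw [← zpow_neg]; exact conjpow1 hc hca hcb j
  have h3 : (a * c ^ (-j)) ^ i = a ^ i * c ^ (-(i * j)) := by
    rw [(hca.symm.zpow_right (-j)).mul_zpow]
    rw [← zpow_mul]
    ring_nf
  have h4 : b ^ j * a ^ i * (b ^ j)⁻¹ = a ^ i * c ^ (-(i * j)) := by
    rw [h1, h2, h3]
  calc b ^ j * a ^ i = (b ^ j * a ^ i * (b ^ j)⁻¹) * b ^ j := by group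
  _ = a ^ i * c ^ (-(i * j)) * b ^ j := by rw [h4]

lemma comm_zpow_zpow (hc : ⁅a, b⁆ = c) (hca : Commute c a) (hcb : Commute c b) (i j : ℤ) :
    ⁅a ^ i, b ^ j⁆ = c ^ (i * j) := by
  have h1 : b ^ j * a ^ (-i) = a ^ (-i) * c ^ (i * j) * b ^ j := by
    have := swap_pow hc hca hcb (-i) j
    rwa [show (-(-i * j)) = i * j by ring] at this
  show a ^ i * b ^ j * (a ^ i)⁻¹ * (b ^ j)⁻¹ = c ^ (i * j)
  rw [show a ^ i * b ^ j * (a ^ i)⁻¹ * (b ^ j)⁻¹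
      = a ^ i * (b ^ j * (a ^ i)⁻¹) * (b ^ j)⁻¹ by group, ← zpow_neg a, h1]
  group

lemma mul_pow_formula (hc : ⁅a, b⁆ = c) (hca : Commute c a) (hcb : Commute c b) (i j : ℤ) :
    ∀ n : ℕ, (a ^ i * b ^ j) ^ n
      = a ^ (i * n) * b ^ (j * n) * c ^ (-(i * j * (∑ k ∈ Finset.range n, (k : ℤ)))) := by
  intro n
  induction n with
  | zero => simp
  | succ n ih =>
      have hswap : b ^ j * a ^ (i * n) = a ^ (i * n) * c ^ (-(i * n * j)) * b ^ j :=
        swap_pow hc hca hcb (i * n) j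
      have hc1 : (c ^ (-(i * (n:ℤ) * j))) * (b ^ (j + j * n))
          = (b ^ (j + j * n)) * (c ^ (-(i * (n:ℤ) * j))) := (hcb.zpow_zpow _ _).eq
      have hS : (∑ k ∈ Finset.range (n+1), (k : ℤ)) = (∑ k ∈ Finset.range n, (k : ℤ)) + n := by
        rw [Finset.sum_range_succ]
      set E : ℤ := -(i * j * (∑ k ∈ Finset.range n, (k : ℤ))) with hE
      calc (a ^ i * b ^ j) ^ (n + 1)
          = a ^ i * (b ^ j * a ^ (i * ↑n)) * (b ^ (j * ↑n) * c ^ E) := by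
            rw [pow_succ', ih]; group
        _ = a ^ i * (a ^ (i * ↑n) * c ^ (-(i * ↑n * j)) * b ^ j) * (b ^ (j * ↑n) * c ^ E) := by
            rw [hswap]
        _ = (a ^ i * a ^ (i * ↑n)) * (c ^ (-(i * ↑n * j)) * b ^ (j + j * ↑n)) * c ^ E := by
            rw [zpow_add b]; group
        _ = (a ^ i * a ^ (i * ↑n)) * (b ^ (j + j * ↑n) * c ^ (-(i * ↑n * j))) * c ^ E := by
            rw [hc1]
        _ = a ^ (i + i * ↑n) * b ^ (j + j * ↑n) * c ^ (-(i * ↑n * j) + E) := by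
            rw [zpow_add a, zpow_add c]; group
        _ = a ^ (i * (n + 1 : ℕ)) * b ^ (j * (n + 1 : ℕ))
              * c ^ (-(i * j * (∑ k ∈ Finset.range (n+1), (k : ℤ)))) := by
            rw [hS, hE]
            rw [show i * ((n : ℕ) + 1 : ℕ) = i + i * (n : ℤ) by push_cast; ring,
              show j * ((n : ℕ) + 1 : ℕ) = j + j * (n : ℤ) by push_cast; ring,
              show -(i * j * ((∑ k ∈ Finset.range n, (k : ℤ)) + n))
                = -(i * (n:ℤ) * j) + -(i * j * (∑ k ∈ Finset.range n, (k : ℤ))) by ring]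

end Calc

section Helpers

variable {G : Type*} [Group G]

lemma zpow_gen_of_not_dvd {p : ℕ} (hp : p.Prime) {x : G} {k : ℕ}
    (hx : x ^ (p ^ k) = 1) {s : ℤ} (hs : ¬ (p : ℤ) ∣ s) :
    x ∈ Subgroup.zpowers (x ^ s) := by
  rw [← Int.natAbs_dvd_natAbs, Int.natAbs_natCast] at hs
  have cop : Nat.Coprime s.natAbs (p ^ k) :=
    Nat.Coprime.pow_right k ((hp.coprime_iff_not_dvd.mpr hs).symm)
  have hco : IsCoprime (s : ℤ) (((p : ℤ)) ^ k) := by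
    rw [Int.isCoprime_iff_gcd_eq_one]
    simpa [Int.gcd, Int.natAbs_pow] using cop
  obtain ⟨u, v, huv⟩ := hco
  refine ⟨u, ?_⟩
  have h1 : x ^ ((p : ℤ) ^ k) = 1 := by
    have : ((p : ℤ) ^ k) = ((p ^ k : ℕ) : ℤ) := by push_cast; ring
    rw [this, zpow_natCast, hx]
  calc (x ^ s) ^ u = x ^ (u * s + v * (p : ℤ) ^ k) := by
        rw [zpow_add, show u * s = s * u from mul_comm u s, zpow_mul,
          show v * (p:ℤ)^k = (p:ℤ)^k * v from mul_comm _ _, zpow_mul, h1, one_zpow, mul_one]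
  _ = x := by rw [huv, zpow_one]

lemma mem_closure_pair {x c : G} (hxc : Commute x c) {g : G}
    (hg : g ∈ Subgroup.closure ({x, c} : Set G)) : ∃ i j : ℤ, g = x ^ i * c ^ j := by
  induction hg using Subgroup.closure_induction with
  | mem g hgmem =>
      rcases Set.mem_insert_iff.mp hgmem with h | h
      · exact ⟨1, 0, by simp [h]⟩
      · rw [Set.mem_singleton_iff] at h
        exact ⟨0, 1, by simp [h]⟩
  | one => exact ⟨0, 0, by simp⟩
  | mul g h _ _ ihg ihh =>
      obtain ⟨i, j, rfl⟩ := ihg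
      obtain ⟨i', j', rfl⟩ := ihh
      refine ⟨i + i', j + j', ?_⟩
      have hswap : c ^ j * x ^ i' = x ^ i' * c ^ j := (hxc.symm.zpow_zpow j i').eq
      calc x ^ i * c ^ j * (x ^ i' * c ^ j') = x ^ i * (c ^ j * x ^ i') * c ^ j' := by group
      _ = x ^ i * (x ^ i' * c ^ j) * c ^ j' := by rw [hswap]
      _ = x ^ (i + i') * c ^ (j + j') := by rw [zpow_add, zpow_add]; group
  | inv g _ ihg =>
      obtain ⟨i, j, rfl⟩ := ihg
      refine ⟨-i, -j, ?_⟩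
      have hswap : c ^ (-j) * x ^ (-i) = x ^ (-i) * c ^ (-j) := (hxc.symm.zpow_zpow _ _).eq
      rw [mul_inv_rev, ← zpow_neg, ← zpow_neg, hswap]

end Helpers

section PhiStep

variable {G : Type*} [Group G]

lemma phi_step {p : ℕ} (hp : p.Prime) {x c : G} (hxc : Commute x c)
    (hc1 : c ≠ 1) (hcp : c ^ p = 1) {k : ℕ} (hxo : x ^ p ^ k = 1)
    (hfr : c ∈ (frattini ↥(Subgroup.closure ({x, c} : Set G))).map
      (Subgroup.closure ({x, c} : Set G)).subtype) :
    c ∈ Subgroup.zpowers (x ^ p) := by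
  set H := Subgroup.closure ({x, c} : Set G) with hH
  have hxH : x ∈ H := Subgroup.subset_closure (Set.mem_insert _ _)
  have hcH : c ∈ H := Subgroup.subset_closure (Set.mem_insert_of_mem _ rfl)
  obtain ⟨z, hz, hzc⟩ := hfr
  have hcP1 : c ^ p ^ 1 = 1 := by rw [pow_one]; exact hcp
  -- auxiliary: any subgroup of H containing x and c is everything
  have top_of : ∀ L : Subgroup ↥H, (⟨x, hxH⟩ : ↥H) ∈ L → (⟨c, hcH⟩ : ↥H) ∈ L → L = ⊤ := by
    intro L hxL hcL
    rw [eq_top_iff]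
    intro h' _
    obtain ⟨i, j, hij⟩ := mem_closure_pair hxc h'.2
    have : h' = (⟨x, hxH⟩ : ↥H) ^ i * (⟨c, hcH⟩ : ↥H) ^ j := by
      apply Subtype.ext
      push_cast
      exact hij
    rw [this]
    exact mul_mem (zpow_mem hxL i) (zpow_mem hcL j)
  by_cases hcx : c ∈ Subgroup.zpowers x
  · -- c is a power of x
    obtain ⟨e, he'⟩ := hcx
    have he : x ^ e = c := he'
    have hxne1 : x ≠ 1 := by
      rintro rfl
      apply hc1
      rw [← he]; simp
    have hxnot : x ∉ Subgroup.zpowers (x ^ p) := by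
      rintro ⟨m, hm⟩
      have hm' : (x ^ p) ^ m = x := hm
      have h1 : (x ^ p) ^ m = x ^ ((p : ℤ) * m) := by
        rw [← zpow_natCast x p, ← zpow_mul]
      have h2 : x ^ ((p : ℤ) * m - 1) = 1 := by
        rw [zpow_sub, ← h1, hm', zpow_one]
        simp
      obtain ⟨t, ht, hot⟩ := (Nat.dvd_prime_pow hp).mp (orderOf_dvd_of_pow_eq_one hxo)
      have ht1 : 1 ≤ t := by
        rcases Nat.eq_zero_or_pos t with h | h
        · exfalso; apply hxne1
          have : orderOf x = 1 := by rw [hot, h, pow_zero]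
          exact orderOf_eq_one_iff.mp this
        · exact h
      have hdvd : ((p : ℤ)) ∣ ((p : ℤ) * m - 1) := by
        have : ((orderOf x : ℤ)) ∣ ((p : ℤ) * m - 1) := orderOf_dvd_iff_zpow_eq_one.mpr h2
        refine dvd_trans ?_ this
        rw [hot]
        exact_mod_cast dvd_pow_self p (Nat.one_le_iff_ne_zero.mp ht1)
      have hd1 : ((p : ℤ)) ∣ ((p : ℤ) * m - ((p : ℤ) * m - 1)) := dvd_sub ⟨m, rfl⟩ hdvd
      have hd2 : ((p : ℤ)) ∣ 1 := by
        rwa [show ((p : ℤ) * m - ((p : ℤ) * m - 1)) = 1 by ring] at hd1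
      have hple : (p : ℤ) ≤ 1 := Int.le_of_dvd one_pos hd2
      have := hp.one_lt
      omega
    set M : Subgroup ↥H := (Subgroup.zpowers (x ^ p)).comap H.subtype with hM
    have hMco : IsCoatom M := by
      constructor
      · intro htop
        have hx' : (⟨x, hxH⟩ : ↥H) ∈ M := by rw [htop]; trivial
        exact hxnot (by simpa [hM, Subgroup.mem_subgroupOf] using hx')
      · intro L hL
        obtain ⟨g', hg'L, hg'M⟩ := SetLike.exists_of_lt hL
        obtain ⟨i, j, hij⟩ := mem_closure_pair hxc g'.2
        have hgg : (g' : G) = x ^ (i + e * j) := by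
          rw [hij, ← he, ← zpow_mul, ← zpow_add]
        have hnd : ¬ ((p : ℤ) ∣ (i + e * j)) := by
          intro ⟨s', hs'⟩
          apply hg'M
          simp only [hM, Subgroup.mem_comap]
          refine ⟨s', ?_⟩
          show ((x ^ p : G)) ^ s' = (g' : G)
          rw [hgg, hs', ← zpow_natCast x p, ← zpow_mul]
        have hxmem : x ∈ Subgroup.zpowers ((x : G) ^ (i + e * j)) :=
          zpow_gen_of_not_dvd hp hxo hnd
        rw [← hgg] at hxmem
        obtain ⟨u, hu⟩ := hxmem
        have hxL : (⟨x, hxH⟩ : ↥H) ∈ L := by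
          have : g' ^ u = (⟨x, hxH⟩ : ↥H) := by
            apply Subtype.ext; push_cast; exact hu
          exact this ▸ zpow_mem hg'L u
        have hcL : (⟨c, hcH⟩ : ↥H) ∈ L := by
          have : (⟨x, hxH⟩ : ↥H) ^ e = (⟨c, hcH⟩ : ↥H) := by
            apply Subtype.ext; push_cast; exact he
          exact this ▸ zpow_mem hxL e
        exact top_of L hxL hcL
    have hzM : z ∈ M := frattini_le_coatom hMco hz
    rw [hM, Subgroup.mem_comap] at hzM
    rw [show (H.subtype z : G) = c from hzc] at hzM
    exact hzM
  · -- c is not a power of x : impossible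
    exfalso
    set M : Subgroup ↥H := (Subgroup.zpowers x).comap H.subtype with hM
    have hMco : IsCoatom M := by
      constructor
      · intro htop
        have hc' : (⟨c, hcH⟩ : ↥H) ∈ M := by rw [htop]; trivial
        exact hcx (by simpa [hM, Subgroup.mem_subgroupOf] using hc')
      · intro L hL
        obtain ⟨g', hg'L, hg'M⟩ := SetLike.exists_of_lt hL
        obtain ⟨i, j, hij⟩ := mem_closure_pair hxc g'.2
        have hnd : ¬ ((p : ℤ) ∣ j) := by
          intro ⟨s', hs'⟩
          apply hg'M
          simp only [hM, Subgroup.mem_comap]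
          have hcj : c ^ j = 1 := by
            rw [hs']
            calc c ^ ((p : ℤ) * s') = ((c ^ (p : ℕ)) : G) ^ s' := by
                  rw [← zpow_natCast c p, ← zpow_mul]
            _ = 1 := by rw [hcp]; simp
          refine ⟨i, ?_⟩
          show (x : G) ^ i = (g' : G)
          rw [hij, hcj, mul_one]
        have hxM : (⟨x, hxH⟩ : ↥H) ∈ M := by
          simp only [hM, Subgroup.mem_comap]
          exact ⟨1, by simp⟩
        have hxL : (⟨x, hxH⟩ : ↥H) ∈ L := hL.le hxM
        have hcjL : (⟨c, hcH⟩ : ↥H) ^ j ∈ L := by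
          have : (⟨c, hcH⟩ : ↥H) ^ j = (⟨x, hxH⟩ : ↥H) ^ (-i) * g' := by
            apply Subtype.ext; push_cast
            rw [hij]; group
          rw [this]
          exact mul_mem (zpow_mem hxL (-i)) hg'L
        have hcmem : c ∈ Subgroup.zpowers (c ^ j) := zpow_gen_of_not_dvd hp hcP1 hnd
        obtain ⟨u, hu⟩ := hcmem
        have hcL : (⟨c, hcH⟩ : ↥H) ∈ L := by
          have : ((⟨c, hcH⟩ : ↥H) ^ j) ^ u = (⟨c, hcH⟩ : ↥H) := by
            apply Subtype.ext; push_cast; exact hu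
          exact this ▸ zpow_mem hcjL u
        exact top_of L hxL hcL
    have hzM : z ∈ M := frattini_le_coatom hMco hz
    rw [hM, Subgroup.mem_comap] at hzM
    rw [show (H.subtype z : G) = c from hzc] at hzM
    exact hcx hzM

end PhiStep

section Descent

variable {G : Type*} [Group G]

lemma not_both_one_zero {p : ℕ} (hp : p.Prime) : ¬(((p:ℤ) ∣ 1) ∧ ((p:ℤ) ∣ 0)) := by
  rintro ⟨h1, -⟩
  have h2 : p ∣ 1 := by exact_mod_cast h1
  have := Nat.le_of_dvd one_pos h2
  have := hp.one_lt
  omega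

lemma descent_step {p : ℕ} (hp : p.Prime) {A B c : G}
    (hAB : Commute A B) (hc1 : c ≠ 1) (hcp : c ^ p = 1)
    {m n : ℕ} (hA : orderOf A = p ^ m) (hB : orderOf B = p ^ n) (hmn : m ≤ n)
    (h : ∀ i j : ℤ, ¬((p:ℤ) ∣ i ∧ (p:ℤ) ∣ j) → c ∈ Subgroup.zpowers (A ^ i * B ^ j)) :
    ∃ (A' : G) (m' : ℕ), Commute A' B ∧ orderOf A' = p ^ m' ∧ m' < m ∧
      (∀ i j : ℤ, ¬((p:ℤ) ∣ i ∧ (p:ℤ) ∣ j) → c ∈ Subgroup.zpowers (A' ^ i * B ^ j)) := by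
  haveI : Fact p.Prime := ⟨hp⟩
  have hppos : (0:ℤ) < (p:ℤ) := by exact_mod_cast hp.pos
  -- c is a power of A and of B
  have hcA : c ∈ Subgroup.zpowers A := by
    have := h 1 0 (not_both_one_zero hp)
    simpa using this
  have hcB : c ∈ Subgroup.zpowers B := by
    have h' := h 0 1 (by rintro ⟨-, h0⟩; exact not_both_one_zero hp ⟨h0, dvd_zero _⟩)
    simpa using h'
  obtain ⟨e, he'⟩ := hcA
  have he : A ^ e = c := he'
  obtain ⟨f, hf'⟩ := hcB
  have hf : B ^ f = c := hf'
  have hAne : A ≠ 1 := by rintro rfl; exact hc1 (by rw [← he, one_zpow])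
  have hBne : B ≠ 1 := by rintro rfl; exact hc1 (by rw [← hf, one_zpow])
  have hm1 : 1 ≤ m := by
    by_contra hm
    have : m = 0 := by omega
    rw [this, pow_zero] at hA
    exact hAne (orderOf_eq_one_iff.mp hA)
  have hn1 : 1 ≤ n := by
    by_contra hn
    have : n = 0 := by omega
    rw [this, pow_zero] at hB
    exact hBne (orderOf_eq_one_iff.mp hB)
  -- extract divisibility of exponents
  have hdivA : ((p:ℤ) ^ (m - 1)) ∣ e := by
    have h1 : A ^ (e * p) = 1 := by
      rw [zpow_mul, he]
      exact_mod_cast hcp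
    have h2 : ((p:ℤ) ^ m) ∣ e * p := by
      have h2' := orderOf_dvd_iff_zpow_eq_one.mpr h1
      rw [hA] at h2'
      exact_mod_cast h2'
    have h3 : ((p:ℤ) ^ (m - 1)) * (p:ℤ) ∣ e * (p:ℤ) := by
      rw [← pow_succ, show m - 1 + 1 = m by omega]
      exact h2
    exact (mul_dvd_mul_iff_right (by omega : (p:ℤ) ≠ 0)).mp h3
  have hdivB : ((p:ℤ) ^ (n - 1)) ∣ f := by
    have h1 : B ^ (f * p) = 1 := by
      rw [zpow_mul, hf]
      exact_mod_cast hcp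
    have h2 : ((p:ℤ) ^ n) ∣ f * p := by
      have h2' := orderOf_dvd_iff_zpow_eq_one.mpr h1
      rw [hB] at h2'
      exact_mod_cast h2'
    have h3 : ((p:ℤ) ^ (n - 1)) * (p:ℤ) ∣ f * (p:ℤ) := by
      rw [← pow_succ, show n - 1 + 1 = n by omega]
      exact h2
    exact (mul_dvd_mul_iff_right (by omega : (p:ℤ) ≠ 0)).mp h3
  obtain ⟨e', hee⟩ := hdivA
  obtain ⟨f', hff⟩ := hdivB
  set c₁ : G := A ^ ((p:ℤ) ^ (m - 1)) with hc₁
  set c₂ : G := B ^ ((p:ℤ) ^ (n - 1)) with hc₂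
  have hc₁e : c₁ ^ e' = c := by rw [hc₁, ← zpow_mul, ← hee, he]
  have hc₂f : c₂ ^ f' = c := by rw [hc₂, ← zpow_mul, ← hff, hf]
  have hc₁p : c₁ ^ (p ^ 1 : ℕ) = 1 := by
    rw [pow_one, hc₁, ← zpow_natCast (A ^ ((p:ℤ) ^ (m-1))) p, ← zpow_mul, ← pow_succ,
      show m - 1 + 1 = m by omega]
    have : ((p:ℤ) ^ m) = ((p ^ m : ℕ) : ℤ) := by push_cast; ring
    rw [this, zpow_natCast, ← hA, pow_orderOf_eq_one]
  have hnd : ¬ ((p:ℤ) ∣ e') := by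
    intro hd
    apply hc1
    rw [← hc₁e]
    obtain ⟨w, hw⟩ := hd
    rw [hw, zpow_mul]
    have : c₁ ^ (p : ℤ) = 1 := by
      have := hc₁p
      rw [pow_one] at this
      exact_mod_cast this
    rw [this, one_zpow]
  -- c₁ is a power of c
  have hc₁c : c₁ ∈ Subgroup.zpowers c := by
    rw [← hc₁e]
    exact zpow_gen_of_not_dvd hp hc₁p hnd
  obtain ⟨al, hal'⟩ := hc₁c
  have hal : c ^ al = c₁ := hal'
  -- the element x
  set t : ℤ := -(f' * al) * (p:ℤ) ^ (n - m) with ht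
  set x : G := A * B ^ t with hx
  have hxB : Commute x B := hAB.mul_left ((Commute.refl B).zpow_left t)
  have hpq : (p:ℤ) ^ (n - m) * (p:ℤ) ^ (m - 1) = (p:ℤ) ^ (n - 1) := by
    rw [← pow_add]
    congr 1
    omega
  have hxpow : x ^ ((p:ℤ) ^ (m - 1)) = 1 := by
    have h1 : x ^ ((p:ℤ) ^ (m - 1)) = A ^ ((p:ℤ) ^ (m - 1)) * (B ^ t) ^ ((p:ℤ) ^ (m - 1)) :=
      (hAB.zpow_right t).mul_zpow _
    have h2 : (B ^ t) ^ ((p:ℤ) ^ (m - 1)) = c₁⁻¹ := by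
      rw [← zpow_mul]
      have harith : t * (p:ℤ) ^ (m - 1) = (p:ℤ) ^ (n - 1) * (-(f' * al)) := by
        rw [ht]
        calc -(f' * al) * (p:ℤ) ^ (n - m) * (p:ℤ) ^ (m - 1)
            = ((p:ℤ) ^ (n - m) * (p:ℤ) ^ (m - 1)) * (-(f' * al)) := by ring
        _ = (p:ℤ) ^ (n - 1) * (-(f' * al)) := by rw [hpq]
      rw [harith, zpow_mul, ← hc₂, zpow_neg, zpow_mul, hc₂f, hal]
    rw [h1, h2, ← hc₁]
    simp
  have hxpN : x ^ ((p ^ (m - 1) : ℕ)) = 1 := by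
    have h0 := hxpow
    rw [show ((p:ℤ) ^ (m - 1)) = ((p ^ (m - 1) : ℕ) : ℤ) by push_cast; ring,
      zpow_natCast] at h0
    exact h0
  obtain ⟨m', hm'le, hm'⟩ := (Nat.dvd_prime_pow hp).mp (orderOf_dvd_of_pow_eq_one hxpN)
  refine ⟨x, m', hxB, hm', by omega, ?_⟩
  intro i j hij
  have hxi : x ^ i * B ^ j = A ^ i * B ^ (t * i + j) := by
    rw [hx, (hAB.zpow_right t).mul_zpow i, ← zpow_mul, mul_assoc, ← zpow_add]
  rw [hxi]
  apply h
  rintro ⟨hpi, hpj⟩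
  apply hij
  refine ⟨hpi, ?_⟩
  have hti : (p:ℤ) ∣ t * i := Dvd.dvd.mul_left hpi t
  have := dvd_sub hpj hti
  rwa [show t * i + j - t * i = j by ring] at this

end Descent

section KeyDescent

variable {G : Type*} [Group G]

lemma keyDescent {p : ℕ} (hp : p.Prime) :
    ∀ N : ℕ, ∀ A B c : G, Commute A B → c ≠ 1 → c ^ p = 1 →
    ∀ m n : ℕ, orderOf A = p ^ m → orderOf B = p ^ n → m + n ≤ N →
    (∀ i j : ℤ, ¬((p:ℤ) ∣ i ∧ (p:ℤ) ∣ j) → c ∈ Subgroup.zpowers (A ^ i * B ^ j)) → False := by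
  intro N
  induction N with
  | zero =>
      intro A B c hAB hc1 hcp m n hA hB hle h
      have hm : m = 0 := by omega
      have hA1 : A = 1 := orderOf_eq_one_iff.mp (by rw [hA, hm, pow_zero])
      have hmem := h 1 0 (not_both_one_zero hp)
      rw [hA1] at hmem
      simp [Subgroup.zpowers_one_eq_bot] at hmem
      exact hc1 hmem
  | succ N ih =>
      intro A B c hAB hc1 hcp m n hA hB hle h
      by_cases hmn : m ≤ n
      · obtain ⟨A', m', hcomm, hord, hlt, h'⟩ := descent_step hp hAB hc1 hcp hA hB hmn h
        exact ih A' B c hcomm hc1 hcp m' n hord hB (by omega) h'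
      · have h2 : ∀ i j : ℤ, ¬((p:ℤ) ∣ i ∧ (p:ℤ) ∣ j) → c ∈ Subgroup.zpowers (B ^ i * A ^ j) := by
          intro i j hij
          have hmem := h j i (by tauto)
          rwa [(hAB.zpow_zpow j i).eq] at hmem
        obtain ⟨B', n', hcomm, hord, hlt, h'⟩ :=
          descent_step hp hAB.symm hc1 hcp hB hA (by omega) h2
        exact ih B' A c hcomm hc1 hcp n' m hord hA (by omega) h'

end KeyDescent


section Core

variable {G : Type*} [Group G]

lemma not_self_mem_zpowers_pow {p : ℕ} (hp : p.Prime) {x : G} (hx1 : x ≠ 1) {k : ℕ}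
    (hxo : x ^ p ^ k = 1) : x ∉ Subgroup.zpowers (x ^ p) := by
  rintro ⟨m, hm⟩
  have hm' : (x ^ p) ^ m = x := hm
  have h1 : (x ^ p) ^ m = x ^ ((p : ℤ) * m) := by
    rw [← zpow_natCast x p, ← zpow_mul]
  have h2 : x ^ ((p : ℤ) * m - 1) = 1 := by
    rw [zpow_sub, ← h1, hm', zpow_one]
    simp
  obtain ⟨t, ht, hot⟩ := (Nat.dvd_prime_pow hp).mp (orderOf_dvd_of_pow_eq_one hxo)
  have ht1 : 1 ≤ t := by
    rcases Nat.eq_zero_or_pos t with h | h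
    · exfalso
      apply hx1
      exact orderOf_eq_one_iff.mp (by rw [hot, h, pow_zero])
    · exact h
  have hdvd : ((p : ℤ)) ∣ ((p : ℤ) * m - 1) := by
    have hd := orderOf_dvd_iff_zpow_eq_one.mpr h2
    rw [hot] at hd
    refine dvd_trans ?_ hd
    exact_mod_cast dvd_pow_self p (Nat.one_le_iff_ne_zero.mp ht1)
  have hd1 : ((p : ℤ)) ∣ ((p : ℤ) * m - ((p : ℤ) * m - 1)) := dvd_sub ⟨m, rfl⟩ hdvd
  have hd2 : ((p : ℤ)) ∣ 1 := by
    rwa [show ((p : ℤ) * m - ((p : ℤ) * m - 1)) = 1 by ring] at hd1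
  have hple : (p : ℤ) ≤ 1 := Int.le_of_dvd one_pos hd2
  have := hp.one_lt
  omega

lemma pow_p_mem_coatom {p : ℕ} (hp : p.Prime) (hG : IsPGroup p G) {M : Subgroup G}
    (hM : IsCoatom M) [M.Normal] (g : G) : g ^ p ∈ M := by
  haveI : Fact p.Prime := ⟨hp⟩
  have hQ : IsPGroup p (G ⧸ M) := hG.to_quotient M
  have hsub : ∀ S : Subgroup (G ⧸ M), S = ⊥ ∨ S = ⊤ := by
    intro S
    have hle : M ≤ S.comap (QuotientGroup.mk' M) := by
      intro y hy
      have h1 : (QuotientGroup.mk' M) y = 1 := (QuotientGroup.eq_one_iff y).mpr hy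
      rw [Subgroup.mem_comap, h1]
      exact S.one_mem
    rcases eq_or_lt_of_le hle with heq | hlt
    · left
      have hmapc : S = Subgroup.map (QuotientGroup.mk' M) (S.comap (QuotientGroup.mk' M)) :=
        (Subgroup.map_comap_eq_self_of_surjective (QuotientGroup.mk'_surjective M) S).symm
      rw [hmapc, ← heq]
      rw [eq_bot_iff]
      rintro q hq
      obtain ⟨y, hy, rfl⟩ := hq
      rw [Subgroup.mem_bot]
      exact (QuotientGroup.eq_one_iff y).mpr hy
    · right
      have h2 : S.comap (QuotientGroup.mk' M) = ⊤ := hM.2 _ hlt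
      have h3 := Subgroup.map_comap_eq_self_of_surjective (QuotientGroup.mk'_surjective M) S
      rw [h2] at h3
      rw [← h3]
      exact Subgroup.map_top_of_surjective _ (QuotientGroup.mk'_surjective M)
  have hqp : ∀ q : G ⧸ M, q ^ p = 1 := by
    intro q
    by_cases hq1 : q = 1
    · rw [hq1, one_pow]
    · rcases hsub (Subgroup.zpowers (q ^ p)) with h2 | h2
      · have : q ^ p ∈ (⊥ : Subgroup (G ⧸ M)) := by
          rw [← h2]
          exact Subgroup.mem_zpowers _
        exact Subgroup.mem_bot.mp this
      · exfalso
        obtain ⟨k, hk⟩ := hQ q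
        apply not_self_mem_zpowers_pow hp hq1 hk
        rw [h2]
        trivial
  have hg : (QuotientGroup.mk' M) (g ^ p) = 1 := by
    rw [map_pow]
    exact hqp _
  exact (QuotientGroup.eq_one_iff _).mp hg

end Core

/-- `H` is an `ICΦ`-subgroup of `G` if `H ∩ [H,G] ≤ Φ(H)`. -/
def IsICPhi {G : Type*} [Group G] (H : Subgroup G) : Prop :=
  H ⊓ ⁅H, (⊤ : Subgroup G)⁆ ≤ (frattini ↥H).map H.subtype

section CoreMain

variable {G : Type*} [Group G]

lemma core_abelian [Finite G] {p : ℕ} (hp : p.Prime) (hodd : Odd p)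
    (hG : IsPGroup p G) (hIC : ∀ H : Subgroup G, IsICPhi H)
    (hmin : ∀ K : Subgroup G, K ≠ ⊤ → ∀ x ∈ K, ∀ y ∈ K, x * y = y * x) :
    ∀ a b : G, a * b = b * a := by
  haveI : Fact p.Prime := ⟨hp⟩
  intro a b
  by_contra hab
  set c := ⁅a, b⁆ with hcdef
  have hcc : ⁅a, b⁆ = c := rfl
  have hc1 : c ≠ 1 := fun h => hab (commutatorElement_eq_one_iff_mul_comm.mp h)
  haveI : Group.IsNilpotent G := hG.isNilpotent
  have hnc : NormalizerCondition G := normalizerCondition_of_isNilpotent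
  -- coatoms above a and b
  have hza : Subgroup.zpowers a ≠ ⊤ := by
    intro h
    have hb : b ∈ Subgroup.zpowers a := by rw [h]; trivial
    obtain ⟨k, hk⟩ := hb
    apply hab
    have hk' : a ^ k = b := hk
    rw [← hk']
    exact ((Commute.refl a).zpow_right k).eq
  have hzb : Subgroup.zpowers b ≠ ⊤ := by
    intro h
    have ha : a ∈ Subgroup.zpowers b := by rw [h]; trivial
    obtain ⟨k, hk⟩ := ha
    apply hab
    have hk' : b ^ k = a := hk
    rw [← hk']
    exact ((Commute.refl b).zpow_right k).eq.symm
  obtain hMa | ⟨Ma, hMa, haMa⟩ := (eq_top_or_exists_le_coatom (Subgroup.zpowers a))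
  · exact absurd hMa hza
  obtain hMb | ⟨Mb, hMb, hbMb⟩ := (eq_top_or_exists_le_coatom (Subgroup.zpowers b))
  · exact absurd hMb hzb
  haveI hMaN : Ma.Normal := NormalizerCondition.normal_of_coatom Ma hnc hMa
  haveI hMbN : Mb.Normal := NormalizerCondition.normal_of_coatom Mb hnc hMb
  have haM : a ∈ Ma := haMa (Subgroup.mem_zpowers a)
  have hbM : b ∈ Mb := hbMb (Subgroup.mem_zpowers b)
  -- c belongs to both maximal subgroups
  have hcMa : c ∈ Ma := by
    have h2 : b * a⁻¹ * b⁻¹ ∈ Ma := hMaN.conj_mem _ (inv_mem haM) b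
    have h3 : c = a * (b * a⁻¹ * b⁻¹) := by rw [hcdef]; group
    rw [h3]
    exact mul_mem haM h2
  have hcMb : c ∈ Mb := by
    have h2 : a * b * a⁻¹ ∈ Mb := hMbN.conj_mem _ hbM a
    have h3 : c = (a * b * a⁻¹) * b⁻¹ := by rw [hcdef]; group
    rw [h3]
    exact mul_mem h2 (inv_mem hbM)
  have hca : Commute c a := hmin Ma hMa.1 c hcMa a haM
  have hcb : Commute c b := hmin Mb hMb.1 c hcMb b hbM
  -- p-th powers are "central enough"
  have hApM : a ^ p ∈ Mb := pow_p_mem_coatom hp hG hMb a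
  have hBpM : b ^ p ∈ Ma := pow_p_mem_coatom hp hG hMa b
  have hAb : Commute (a ^ p) b := hmin Mb hMb.1 _ hApM b hbM
  have hBa : Commute (b ^ p) a := hmin Ma hMa.1 _ hBpM a haM
  have hAB : Commute (a ^ p) (b ^ p) := hAb.pow_right p
  -- c ^ p = 1
  have hcp : c ^ p = 1 := by
    have h1 : ⁅a ^ (p : ℤ), b ^ (1 : ℤ)⁆ = c ^ ((p : ℤ) * 1) := comm_zpow_zpow hcc hca hcb p 1
    have h2 : ⁅a ^ (p : ℤ), b ^ (1 : ℤ)⁆ = 1 := by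
      rw [zpow_one, zpow_natCast]
      exact commutatorElement_eq_one_iff_commute.mpr hAb
    have h3 : c ^ ((p : ℤ) * 1) = 1 := by rw [← h1, h2]
    rw [mul_one] at h3
    exact_mod_cast h3
  have hcp1 : c ^ (p ^ 1 : ℕ) = 1 := by rw [pow_one]; exact hcp
  -- the Gauss sum is divisible by p
  have hpS : (p : ℤ) ∣ (∑ k ∈ Finset.range p, (k : ℤ)) := by
    have hg : (∑ k ∈ Finset.range p, k) * 2 = p * (p - 1) := Finset.sum_range_id_mul_two p
    have hdvd2 : p ∣ (∑ k ∈ Finset.range p, k) * 2 := ⟨p - 1, hg⟩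
    have hcop : Nat.Coprime p 2 := by
      rcases hodd with ⟨t, ht⟩
      have : ¬ 2 ∣ p := by omega
      exact (Nat.coprime_primes hp Nat.prime_two).mpr (by rintro rfl; omega)
    have hnat : p ∣ (∑ k ∈ Finset.range p, k) := (Nat.Coprime.dvd_of_dvd_mul_right hcop) hdvd2
    have : (∑ k ∈ Finset.range p, (k : ℤ)) = ((∑ k ∈ Finset.range p, k : ℕ) : ℤ) := by
      push_cast; ring
    rw [this]
    exact_mod_cast hnat
  -- main condition for the descent
  have h_all : ∀ i j : ℤ, ¬(((p:ℤ) ∣ i) ∧ ((p:ℤ) ∣ j)) →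
      c ∈ Subgroup.zpowers ((a ^ p) ^ i * (b ^ p) ^ j) := by
    intro i j hij
    set x : G := a ^ i * b ^ j with hxdef
    have hxc : Commute x c :=
      Commute.mul_left (hca.symm.zpow_left i) (hcb.symm.zpow_left j)
    set H := Subgroup.closure ({x, c} : Set G) with hHdef
    have hxH : x ∈ H := Subgroup.subset_closure (Set.mem_insert _ _)
    have hcH : c ∈ H := Subgroup.subset_closure (Set.mem_insert_of_mem _ rfl)
    -- c lies in ⁅H, ⊤⁆
    have hcT : c ∈ ⁅H, (⊤ : Subgroup G)⁆ := by
      by_cases hpi : (p : ℤ) ∣ i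
      · have hpj : ¬ (p : ℤ) ∣ j := fun h => hij ⟨hpi, h⟩
        have hcomm : ⁅x, a⁆ = c ^ (-j) := by
          have hconj : b ^ j * a * b ^ (-j) = a * c ^ (-j) := conjpow1 hcc hca hcb j
          have e1 : ⁅x, a⁆ = a ^ i * (b ^ j * a * b ^ (-j)) * a ^ (-i) * a⁻¹ := by
            rw [hxdef]
            simp only [commutatorElement_def]
            group
          have hmove : c ^ (-j) * a ^ (-i) = a ^ (-i) * c ^ (-j) := (hca.zpow_zpow (-j) (-i)).eq
          have hmove2 : c ^ (-j) * a⁻¹ = a⁻¹ * c ^ (-j) :=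
            ((hca.zpow_left (-j)).inv_right).eq
          calc ⁅x, a⁆ = a ^ i * (a * c ^ (-j)) * a ^ (-i) * a⁻¹ := by rw [e1, hconj]
          _ = (a ^ i * a) * (c ^ (-j) * a ^ (-i)) * a⁻¹ := by group
          _ = (a ^ i * a) * (a ^ (-i) * c ^ (-j)) * a⁻¹ := by rw [hmove]
          _ = (a ^ i * a * a ^ (-i)) * (c ^ (-j) * a⁻¹) := by group
          _ = (a ^ i * a * a ^ (-i)) * (a⁻¹ * c ^ (-j)) := by rw [hmove2]
          _ = c ^ (-j) := by group
        have hmemT : ⁅x, a⁆ ∈ ⁅H, (⊤ : Subgroup G)⁆ :=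
          Subgroup.commutator_mem_commutator hxH (Subgroup.mem_top a)
        rw [hcomm] at hmemT
        have hnegj : ¬ (p : ℤ) ∣ (-j) := fun hd => hpj (dvd_neg.mp hd)
        obtain ⟨u, hu⟩ := zpow_gen_of_not_dvd hp hcp1 hnegj
        have hu' : (c ^ (-j)) ^ u = c := hu
        exact hu' ▸ zpow_mem hmemT u
      · have hcomm : ⁅x, b⁆ = c ^ i := by
          have e1 : ⁅x, b⁆ = ⁅a ^ i, b ^ (1 : ℤ)⁆ := by
            rw [hxdef]
            simp only [commutatorElement_def]
            group
          rw [e1, comm_zpow_zpow hcc hca hcb i 1, mul_one]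
        have hmemT : ⁅x, b⁆ ∈ ⁅H, (⊤ : Subgroup G)⁆ :=
          Subgroup.commutator_mem_commutator hxH (Subgroup.mem_top b)
        rw [hcomm] at hmemT
        obtain ⟨u, hu⟩ := zpow_gen_of_not_dvd hp hcp1 hpi
        have hu' : (c ^ i) ^ u = c := hu
        exact hu' ▸ zpow_mem hmemT u
    have hfr : c ∈ (frattini ↥H).map H.subtype := hIC H ⟨hcH, hcT⟩
    obtain ⟨k, hk⟩ := hG x
    have hres : c ∈ Subgroup.zpowers (x ^ p) := phi_step hp hxc hc1 hcp hk hfr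
    have hxp : x ^ p = (a ^ p) ^ i * (b ^ p) ^ j := by
      have hf := mul_pow_formula hcc hca hcb i j p
      have hcS : c ^ (-(i * j * (∑ k ∈ Finset.range p, (k : ℤ)))) = 1 := by
        obtain ⟨w, hw⟩ := hpS
        rw [hw, show (-(i * j * ((p : ℤ) * w))) = (p : ℤ) * (-(i * j * w)) by ring, zpow_mul]
        rw [show (c ^ ((p : ℕ) : ℤ)) = 1 by rw [zpow_natCast]; exact hcp, one_zpow]
      have ha' : a ^ (i * ((p : ℕ) : ℤ)) = (a ^ p) ^ i := by
        rw [← zpow_natCast a p, ← zpow_mul, mul_comm]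
      have hb' : b ^ (j * ((p : ℕ) : ℤ)) = (b ^ p) ^ j := by
        rw [← zpow_natCast b p, ← zpow_mul, mul_comm]
      calc x ^ p = a ^ (i * ((p : ℕ) : ℤ)) * b ^ (j * ((p : ℕ) : ℤ))
            * c ^ (-(i * j * (∑ k ∈ Finset.range p, (k : ℤ)))) := hf
      _ = (a ^ p) ^ i * (b ^ p) ^ j := by rw [hcS, mul_one, ha', hb']
    rw [hxp] at hres
    exact hres
  obtain ⟨m, hm⟩ := IsPGroup.iff_orderOf.mp hG (a ^ p)
  obtain ⟨n, hn⟩ := IsPGroup.iff_orderOf.mp hG (b ^ p)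
  exact keyDescent hp (m + n) (a ^ p) (b ^ p) c hAB hc1 hcp m n hm hn le_rfl h_all

end CoreMain

section Transfer

variable {G : Type*} [Group G]

lemma isICPhi_subgroup (K : Subgroup G) (hIC : ∀ H : Subgroup G, IsICPhi H)
    (H' : Subgroup ↥K) : IsICPhi H' := by
  intro y hy
  obtain ⟨hy1, hy2⟩ := hy
  set H : Subgroup G := H'.map K.subtype with hHdef
  have hinj : Function.Injective K.subtype := K.subtype_injective
  have h1 : (y : G) ∈ H := ⟨y, hy1, rfl⟩
  have h2 : (y : G) ∈ ⁅H, (⊤ : Subgroup G)⁆ := by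
    have hmap : (⁅H', (⊤ : Subgroup ↥K)⁆).map K.subtype
        = ⁅H'.map K.subtype, (⊤ : Subgroup ↥K).map K.subtype⁆ :=
      Subgroup.map_commutator _ _ _
    have hle : ⁅H'.map K.subtype, (⊤ : Subgroup ↥K).map K.subtype⁆ ≤ ⁅H, (⊤ : Subgroup G)⁆ :=
      Subgroup.commutator_mono le_rfl le_top
    exact hle (hmap ▸ ⟨y, hy2, rfl⟩)
  obtain ⟨z, hz, hzc⟩ := hIC H ⟨h1, h2⟩
  set e : ↥H' ≃* ↥H := Subgroup.equivMapOfInjective H' K.subtype hinj with hedef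
  have hsurj : Function.Surjective (e.symm : ↥H →* ↥H') := e.symm.surjective
  have hle := frattini_le_comap_frattini_of_surjective (φ := (e.symm : ↥H →* ↥H')) hsurj
  have hz' : e.symm z ∈ frattini ↥H' := by
    have := hle hz
    simpa using this
  refine ⟨e.symm z, hz', ?_⟩
  have hco : ((H'.subtype (e.symm z) : ↥K) : G) = ((y : ↥K) : G) := by
    have h3 : (e (e.symm z) : G) = K.subtype ((e.symm z : ↥K)) :=
      Subgroup.coe_equivMapOfInjective_apply H' K.subtype hinj (e.symm z)
    rw [e.apply_symm_apply] at h3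
    have h4 : (z : G) = (y : G) := hzc
    show K.subtype ((e.symm z : ↥K)) = _
    rw [← h3]
    exact h4
  exact hinj hco

end Transfer

universe u

theorem aux_abelian {p : ℕ} (hp : p.Prime) (hodd : Odd p) :
    ∀ (N : ℕ) (G : Type u) (_ : Group G) (_ : Finite G), IsPGroup p G →
      (∀ H : Subgroup G, IsICPhi H) → Nat.card G ≤ N → ∀ a b : G, a * b = b * a := by
  intro N
  induction N with
  | zero =>
      intro G _ _ _ _ hcard
      exfalso
      have : 0 < Nat.card G := Nat.card_pos
      omega
  | succ N ih =>
      intro G _ _ hG hIC hcard a b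
      apply core_abelian hp hodd hG hIC ?_ a b
      intro K hK x hx y hy
      have hlt : Nat.card ↥K < Nat.card G :=
        lt_of_le_of_ne (Subgroup.card_le_card_group K)
          (fun h => hK (Subgroup.eq_top_of_card_eq K h))
      have hcomm := ih ↥K inferInstance inferInstance (hG.to_subgroup K) (isICPhi_subgroup K hIC) (by omega)
        ⟨x, hx⟩ ⟨y, hy⟩
      have h2 := congrArg K.subtype hcomm
      simpa using h2

theorem stmt7 {P : Type*} [Group P] [Finite P] (p : ℕ) (hp : p.Prime)
    (hodd : Odd p) (hPgrp : IsPGroup p P)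
    (hIC : ∀ H : Subgroup P, IsICPhi H) : ∀ a b : P, a * b = b * a := by
  intro a b
  exact aux_abelian hp hodd (Nat.card P) P inferInstance inferInstance hPgrp hIC le_rfl a b
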